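/- Let k be a field, A an associative unital k-algebra, and n ≥ 1. For a k-algebra R, let [R, R] denote the k-linear span of all commutators x y − y x, x, y ∈ R. Then the trace map tr : Mat_n(A) → A, (a_{ij}) ↦ Σ_{i} a_{ii}, carries [Mat_n(A), Mat_n(A)] into [A, A], and the induced k-linear map Mat_n(A) / [Mat_n(A), Mat_n(A)] → A / [A, A] is an isomorphism of k-vector spaces. -/

import Mathlib

open Matrix

/-- The `k`-linear span of commutators `x*y - y*x` in a `k`-algebra `R`. -/
def commutatorSubmodule (k : Type*) [Field k] (R : Type*) [Ring R] [Algebra k R] :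
    Submodule k R :=
  Submodule.span k {x : R | ∃ p q : R, x = p * q - q * p}

lemma comm_mem_commutatorSubmodule (k : Type*) [Field k] (R : Type*) [Ring R] [Algebra k R]
    (p q : R) : p * q - q * p ∈ commutatorSubmodule k R :=
  Submodule.subset_span ⟨p, q, rfl⟩

section Aux

variable (k : Type*) [Field k] (A : Type*) [Ring A] [Algebra k A] (n : ℕ) [NeZero n]

/-- `a ↦ single 0 0 a` as a linear map. -/
def stdBM00 : A →ₗ[k] Matrix (Fin n) (Fin n) A where
  toFun a := single 0 0 a
  map_add' a b := single_add 0 0 a b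
  map_smul' r a := (smul_single r 0 0 a).symm

lemma trace_mem (M : Matrix (Fin n) (Fin n) A)
    (hM : M ∈ commutatorSubmodule k (Matrix (Fin n) (Fin n) A)) :
    M.trace ∈ commutatorSubmodule k A := by
  have : commutatorSubmodule k (Matrix (Fin n) (Fin n) A) ≤
      (commutatorSubmodule k A).comap (Matrix.traceLinearMap (Fin n) k A) := by
    rw [commutatorSubmodule, Submodule.span_le]
    rintro _ ⟨P, Q, rfl⟩
    simp only [SetLike.mem_coe, Submodule.mem_comap, map_sub, Matrix.traceLinearMap_apply]
    have h1 : (P * Q).trace = ∑ i, ∑ j, P i j * Q j i := by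
      simp [Matrix.trace, Matrix.diag, Matrix.mul_apply]
    have h2 : (Q * P).trace = ∑ i, ∑ j, Q j i * P i j := by
      simp only [Matrix.trace, Matrix.diag, Matrix.mul_apply]
      exact Finset.sum_comm
    rw [h1, h2, ← Finset.sum_sub_distrib]
    refine Submodule.sum_mem _ fun i _ => ?_
    rw [← Finset.sum_sub_distrib]
    exact Submodule.sum_mem _ fun j _ => comm_mem_commutatorSubmodule k A _ _
  exact this hM

lemma offdiag_mem (i j : Fin n) (hij : i ≠ j) (a : A) :
    single i j a ∈ commutatorSubmodule k (Matrix (Fin n) (Fin n) A) := by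
  have := comm_mem_commutatorSubmodule k (Matrix (Fin n) (Fin n) A)
    (single i j a) (single j j 1)
  rwa [Matrix.single_mul_single_same,
    Matrix.single_mul_single_of_ne (c := (1:A)) j j i (fun hh => hij hh.symm) a,
    mul_one, sub_zero] at this

lemma diag_mem (i : Fin n) (a : A) :
    single i i a - single 0 0 a
      ∈ commutatorSubmodule k (Matrix (Fin n) (Fin n) A) := by
  have := comm_mem_commutatorSubmodule k (Matrix (Fin n) (Fin n) A)
    (single i (0 : Fin n) a) (single (0 : Fin n) i 1)
  rwa [Matrix.single_mul_single_same, Matrix.single_mul_single_same, mul_one, one_mul] at this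

lemma stdBM00_mem (a : A) (ha : a ∈ commutatorSubmodule k A) :
    stdBM00 k A n a ∈ commutatorSubmodule k (Matrix (Fin n) (Fin n) A) := by
  have : commutatorSubmodule k A ≤
      (commutatorSubmodule k (Matrix (Fin n) (Fin n) A)).comap (stdBM00 k A n) := by
    rw [commutatorSubmodule, Submodule.span_le]
    rintro _ ⟨p, q, rfl⟩
    simp only [SetLike.mem_coe, Submodule.mem_comap, map_sub]
    have h1 : stdBM00 k A n (p * q) = stdBM00 k A n p * stdBM00 k A n q := by
      simp [stdBM00]
    have h2 : stdBM00 k A n (q * p) = stdBM00 k A n q * stdBM00 k A n p := by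
      simp [stdBM00]
    rw [h1, h2]
    exact comm_mem_commutatorSubmodule k _ _ _
  exact this ha

/-- Key lemma: a matrix whose trace lies in `[A,A]` lies in `[Matₙ(A),Matₙ(A)]`. -/
lemma key (M : Matrix (Fin n) (Fin n) A) (hM : M.trace ∈ commutatorSubmodule k A) :
    M ∈ commutatorSubmodule k (Matrix (Fin n) (Fin n) A) := by
  have hsplit : M - stdBM00 k A n M.trace
      ∈ commutatorSubmodule k (Matrix (Fin n) (Fin n) A) := by
    have hM' : M = ∑ i, ∑ j, single i j (M i j) := matrix_eq_sum_single M
    have htr : stdBM00 k A n M.trace = ∑ i, single 0 0 (M i i) := by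
      rw [show M.trace = ∑ i, M i i from rfl, map_sum]
      rfl
    rw [htr]
    nth_rewrite 1 [hM']
    rw [← Finset.sum_sub_distrib]
    refine Submodule.sum_mem _ fun i _ => ?_
    have hinner : ∑ j, single i j (M i j) - single 0 0 (M i i)
        = ∑ j, (single i j (M i j)
            - if j = i then single 0 0 (M i j) else 0) := by
      rw [Finset.sum_sub_distrib, Finset.sum_ite_eq' Finset.univ i
        (fun j => single (0 : Fin n) 0 (M i j))]
      simp
    rw [hinner]
    refine Submodule.sum_mem _ fun j _ => ?_
    by_cases h : j = i
    · subst h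
      simpa using diag_mem k A n j (M j j)
    · rw [if_neg h, sub_zero]
      exact offdiag_mem k A n i j (fun hh => h hh.symm) (M i j)
  have h2 := stdBM00_mem k A n M.trace hM
  have := Submodule.add_mem _ hsplit h2
  simpa using this
end Aux

/-- The trace `Matₙ(A) → A` maps `[Matₙ(A), Matₙ(A)]` into `[A, A]`,
and induces a `k`-linear isomorphism `Matₙ(A)/[Matₙ(A), Matₙ(A)] ≅ A/[A,A]`. -/
theorem trace_commutator_quotient_bijective
    (k : Type*) [Field k] (A : Type*) [Ring A] [Algebra k A] (n : ℕ) (hn : 1 ≤ n) :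
    ∃ h : commutatorSubmodule k (Matrix (Fin n) (Fin n) A) ≤
        (commutatorSubmodule k A).comap (Matrix.traceLinearMap (Fin n) k A),
      Function.Bijective
        (Submodule.mapQ (commutatorSubmodule k (Matrix (Fin n) (Fin n) A))
          (commutatorSubmodule k A) (Matrix.traceLinearMap (Fin n) k A) h) := by
  haveI : NeZero n := ⟨by omega⟩
  refine ⟨fun M hM => trace_mem k A n M hM, ?_, ?_⟩
  · -- injective
    rw [← LinearMap.ker_eq_bot, Submodule.eq_bot_iff]
    intro x hx
    obtain ⟨M, rfl⟩ := Submodule.Quotient.mk_surjective _ x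
    rw [LinearMap.mem_ker] at hx
    change Submodule.Quotient.mk (Matrix.traceLinearMap (Fin n) k A M) = 0 at hx
    rw [Submodule.Quotient.mk_eq_zero] at hx ⊢
    exact key k A n M hx
  · -- surjective
    intro y
    obtain ⟨a, rfl⟩ := Submodule.Quotient.mk_surjective _ y
    refine ⟨Submodule.Quotient.mk (single 0 0 a), ?_⟩
    change Submodule.Quotient.mk (Matrix.traceLinearMap (Fin n) k A _) = _
    congr 1
    simpa using Matrix.trace_single_eq_same (i := (0 : Fin n)) (c := a)
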